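/- Let 𝔬 be a commutative ring, A a commutative 𝔬-algebra, σ : A → A an 𝔬-algebra endomorphism, Δ a σ-derivation on A, and q ∈ A such that Δ(σ(z)) = q·σ(Δ(z)) for all z ∈ A. Define the bracket coefficient C(a,b) := σ(a)Δ(b) − σ(b)Δ(a) for a, b ∈ A, so that ⟪a·Δ, b·Δ⟫ = C(a,b)·Δ. Then the twisted (hom-Lie) Jacobi identity holds: the cyclic sum over (a, b, c) of C(σ(a), C(b,c)) + q·C(a, C(b,c)) is zero, i.e. [C(σ(a),C(b,c)) + C(σ(b),C(c,a)) + C(σ(c),C(a,b))] + q·[C(a,C(b,c)) + C(b,C(c,a)) + C(c,C(a,b))] = 0 for all a, b, c ∈ A. -/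
import Mathlib


/-- Let `𝔬` be a commutative ring, `A` a commutative `𝔬`-algebra,
`σ : A → A` an `𝔬`-algebra endomorphism, `Δ` a `σ`-derivation on `A`, and `q ∈ A`
with `Δ (σ z) = q * σ (Δ z)` for all `z`.  With the bracket coefficient
`C a b := σ a * Δ b − σ b * Δ a`, the twisted (hom-Lie) Jacobi identity holds:
`[C (σ a) (C b c) + C (σ b) (C c a) + C (σ c) (C a b)]
  + q * [C a (C b c) + C b (C c a) + C c (C a b)] = 0`. -/
theorem homLie_jacobi (𝔬 A : Type*) [CommRing 𝔬] [CommRing A] [Algebra 𝔬 A]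
    (σ : A →ₐ[𝔬] A) (Δ : A →ₗ[𝔬] A)
    (hΔ : ∀ b c : A, Δ (b * c) = Δ b * c + σ b * Δ c)
    (q : A) (hq : ∀ z : A, Δ (σ z) = q * σ (Δ z))
    (C : A → A → A) (hC : ∀ a b : A, C a b = σ a * Δ b - σ b * Δ a) :
    ∀ a b c : A,
      (C (σ a) (C b c) + C (σ b) (C c a) + C (σ c) (C a b))
        + q * (C a (C b c) + C b (C c a) + C c (C a b)) = 0 := by
  have key : ∀ u v : A, Δ u * v + σ u * Δ v = Δ v * u + σ v * Δ u := by
    intro u v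
    rw [← hΔ, ← hΔ, mul_comm]
  have key2 : ∀ x v : A, q * σ (Δ x) * v + σ (σ x) * Δ v
      = Δ v * σ x + σ v * (q * σ (Δ x)) := by
    intro x v
    have := key (σ x) v
    rwa [hq] at this
  intro a b c
  simp only [hC, map_sub, map_mul, hΔ, hq]
  linear_combination q * (σ c * key2 a (Δ b) - σ a * key2 c (Δ b)
    + σ a * key2 b (Δ c) - σ b * key2 a (Δ c)
    + σ b * key2 c (Δ a) - σ c * key2 b (Δ a))
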